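/- Let r ≥ 2 and n = r + 1. Then H_D is invertible over ℚ, its entries are constant along diagonals (i.e., (H_D⁻¹)_{ab} = (H_D⁻¹)_{a+c,b+c} for all admissible c ∈ ℤ, with a, b ∈ {1,…,r(r+1)}), and its r×r blocks satisfy: (H_D⁻¹)_{αα} = T_rᵗ − T_r for every α; (H_D⁻¹)_{αβ} = T_r^(β−α) − T_r^(β−α+1) + (T_rᵗ)^(r−β+α+1) − (T_rᵗ)^(r−β+α) for 1 ≤ α < β ≤ n; and (H_D⁻¹)_{αβ} = −((H_D⁻¹)_{βα})ᵗ for α > β. -/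

import Mathlib

open Matrix Finset

set_option maxHeartbeats 4000000

def Jr (r : ℕ) : Matrix (Fin r) (Fin r) ℚ :=
  Matrix.of fun i k => if (i : ℕ) + 1 = (k : ℕ) then 1 else 0

lemma sum_ind_eq (r : ℕ) (T : ℤ) (g : Fin r → ℚ) (x : ℚ)
    (hg : ∀ t : Fin r, ((t : ℕ) : ℤ) ≠ T → g t = 0)
    (hx : ∀ t : Fin r, ((t : ℕ) : ℤ) = T → g t = x) :
    (∑ t : Fin r, g t) = if 0 ≤ T ∧ T < (r : ℤ) then x else 0 := by
  by_cases h : 0 ≤ T ∧ T < (r : ℤ)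
  · have ht : T.toNat < r := by omega
    rw [if_pos h, Finset.sum_eq_single (⟨T.toNat, ht⟩ : Fin r)]
    · exact hx _ (by simp; omega)
    · intro b _ hb
      refine hg b fun hbT => hb (Fin.ext ?_)
      simp only [] at hbT ⊢
      omega
    · intro habs; exact absurd (Finset.mem_univ _) habs
  · rw [if_neg h]
    exact Finset.sum_eq_zero fun t _ => hg t (by have := t.isLt; omega)

lemma Jr_pow (r m : ℕ) (i k : Fin r) :
    ((Jr r) ^ m) i k = if (i : ℕ) + m = (k : ℕ) then 1 else 0 := by
  induction m generalizing k with
  | zero => simp only [pow_zero, Matrix.one_apply, add_zero, Fin.ext_iff]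
  | succ m ih =>
    rw [pow_succ, Matrix.mul_apply]
    have key : (∑ t : Fin r, ((Jr r) ^ m) i t * Jr r t k)
        = if 0 ≤ ((i : ℕ) + m : ℤ) ∧ ((i : ℕ) + m : ℤ) < (r : ℤ) then
            (if (i : ℕ) + m + 1 = (k : ℕ) then (1:ℚ) else 0) else 0 := by
      refine sum_ind_eq r ((i : ℕ) + m : ℤ) _ _ ?_ ?_
      · intro t ht
        rw [ih, if_neg (by omega), zero_mul]
      · intro t ht
        rw [ih, if_pos (by omega), one_mul, Jr, Matrix.of_apply]
        congr 1
        simp only [eq_iff_iff]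
        omega
    rw [key]
    have hk := k.isLt
    split_ifs <;> first | rfl | omega

lemma Jr_t_pow (r m : ℕ) (i k : Fin r) :
    (((Jr r)ᵀ) ^ m) i k = if (k : ℕ) + m = (i : ℕ) then 1 else 0 := by
  rw [← Matrix.transpose_pow, Matrix.transpose_apply, Jr_pow]

def Kblk (r : ℕ) (β γ : Fin (r + 1)) : Matrix (Fin r) (Fin r) ℚ :=
  if β = γ then (Jr r)ᵀ - Jr r
  else if β < γ then
    Jr r ^ ((γ : ℕ) - (β : ℕ)) - Jr r ^ ((γ : ℕ) - (β : ℕ) + 1) +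
      ((Jr r)ᵀ) ^ (r - ((γ : ℕ) - (β : ℕ)) + 1) - ((Jr r)ᵀ) ^ (r - ((γ : ℕ) - (β : ℕ)))
  else
    - (Jr r ^ ((β : ℕ) - (γ : ℕ)) - Jr r ^ ((β : ℕ) - (γ : ℕ) + 1) +
      ((Jr r)ᵀ) ^ (r - ((β : ℕ) - (γ : ℕ)) + 1) - ((Jr r)ᵀ) ^ (r - ((β : ℕ) - (γ : ℕ))))ᵀ

def Kmat (r : ℕ) : Matrix (Fin (r + 1) × Fin r) (Fin (r + 1) × Fin r) ℚ :=
  Matrix.of fun p q => Kblk r p.1 q.1 p.2 q.2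

lemma Kmat_apply (r : ℕ) (p q : Fin (r + 1) × Fin r) :
    Kmat r p q = Kblk r p.1 q.1 p.2 q.2 := rfl

lemma Kblk_apply_diag (r : ℕ) (γ : Fin (r + 1)) (k l : Fin r) :
    Kblk r γ γ k l =
      (if ((k:ℕ):ℤ) = ((l:ℕ):ℤ) + 1 then 1 else 0)
        - (if ((k:ℕ):ℤ) = ((l:ℕ):ℤ) - 1 then 1 else 0)
        + (if ((k:ℕ):ℤ) = -1 then 1 else 0)
        - (if ((k:ℕ):ℤ) = -1 then 1 else 0) := by
  rw [Kblk, if_pos rfl, Matrix.sub_apply, Matrix.transpose_apply, Jr]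
  simp only [Matrix.of_apply]
  split_ifs <;> first | (exfalso; omega) | norm_num

lemma Kblk_apply_lt (r : ℕ) (β γ : Fin (r + 1)) (h : β < γ) (k l : Fin r) :
    Kblk r β γ k l =
      (if ((k:ℕ):ℤ) = ((l:ℕ):ℤ) - (((γ:ℕ):ℤ) - ((β:ℕ):ℤ)) then 1 else 0)
      - (if ((k:ℕ):ℤ) = ((l:ℕ):ℤ) - (((γ:ℕ):ℤ) - ((β:ℕ):ℤ)) - 1 then 1 else 0)
      + (if ((k:ℕ):ℤ) = ((l:ℕ):ℤ) + (r:ℤ) - (((γ:ℕ):ℤ) - ((β:ℕ):ℤ)) + 1 then 1 else 0)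
      - (if ((k:ℕ):ℤ) = ((l:ℕ):ℤ) + (r:ℤ) - (((γ:ℕ):ℤ) - ((β:ℕ):ℤ)) then 1 else 0) := by
  have h' : (β : ℕ) < (γ : ℕ) := h
  have hγ : (γ : ℕ) ≤ r := by omega
  have hk := k.isLt; have hl := l.isLt
  rw [Kblk, if_neg (by exact fun he => absurd he (ne_of_lt h)), if_pos h]
  simp only [Matrix.sub_apply, Matrix.add_apply, Jr_pow, Jr_t_pow]
  split_ifs <;> first | (exfalso; omega) | norm_num

lemma Kblk_apply_gt (r : ℕ) (β γ : Fin (r + 1)) (h : γ < β) (k l : Fin r) :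
    Kblk r β γ k l =
      (if ((k:ℕ):ℤ) = ((l:ℕ):ℤ) + (((β:ℕ):ℤ) - ((γ:ℕ):ℤ)) + 1 then 1 else 0)
      - (if ((k:ℕ):ℤ) = ((l:ℕ):ℤ) + (((β:ℕ):ℤ) - ((γ:ℕ):ℤ)) then 1 else 0)
      + (if ((k:ℕ):ℤ) = ((l:ℕ):ℤ) + (((β:ℕ):ℤ) - ((γ:ℕ):ℤ)) - (r:ℤ) then 1 else 0)
      - (if ((k:ℕ):ℤ) = ((l:ℕ):ℤ) + (((β:ℕ):ℤ) - ((γ:ℕ):ℤ)) - (r:ℤ) - 1 then 1 else 0) := by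
  have h' : (γ : ℕ) < (β : ℕ) := h
  have hβ : (β : ℕ) ≤ r := by omega
  have hk := k.isLt; have hl := l.isLt
  rw [Kblk, if_neg (by exact fun he => absurd he.symm (ne_of_lt h)),
    if_neg (by exact fun hc => absurd hc (not_lt_of_gt h))]
  simp only [Matrix.neg_apply, Matrix.transpose_apply, Matrix.sub_apply, Matrix.add_apply,
    Jr_pow, Jr_t_pow]
  split_ifs <;> first | (exfalso; omega) | norm_num

lemma S1 (r : ℕ) (J : ℕ) (T : ℤ) :
    (∑ k : Fin r, (if (k : ℕ) ≤ J then (1:ℚ) else 0) * (if ((k:ℕ):ℤ) = T then 1 else 0))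
      = if 0 ≤ T ∧ T < (r:ℤ) ∧ T ≤ (J:ℤ) then 1 else 0 := by
  have := sum_ind_eq r T
    (fun k => (if (k : ℕ) ≤ J then (1:ℚ) else 0) * (if ((k:ℕ):ℤ) = T then 1 else 0))
    (if 0 ≤ T ∧ T ≤ (J:ℤ) then 1 else 0)
    (fun t ht => by rw [if_neg ht, mul_zero])
    (fun t ht => by rw [if_pos ht]; split_ifs <;> first | (exfalso; omega) | norm_num)
  rw [this]
  split_ifs <;> first | (exfalso; omega) | norm_num

lemma S2 (r : ℕ) (J : ℕ) (T : ℤ) :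
    (∑ k : Fin r, (if J ≤ (k : ℕ) then (1:ℚ) else 0) * (if ((k:ℕ):ℤ) = T then 1 else 0))
      = if (J:ℤ) ≤ T ∧ T < (r:ℤ) then 1 else 0 := by
  have := sum_ind_eq r T
    (fun k => (if J ≤ (k : ℕ) then (1:ℚ) else 0) * (if ((k:ℕ):ℤ) = T then 1 else 0))
    (if (J:ℤ) ≤ T then 1 else 0)
    (fun t ht => by rw [if_neg ht, mul_zero])
    (fun t ht => by rw [if_pos ht]; split_ifs <;> first | (exfalso; omega) | norm_num)
  rw [this]
  split_ifs <;> first | (exfalso; omega) | norm_num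

lemma S1four (r : ℕ) (J : ℕ) (T1 T2 T3 T4 : ℤ) :
    (∑ k : Fin r, (if (k : ℕ) ≤ J then (1:ℚ) else 0) *
      ((if ((k:ℕ):ℤ) = T1 then 1 else 0) - (if ((k:ℕ):ℤ) = T2 then 1 else 0)
        + (if ((k:ℕ):ℤ) = T3 then 1 else 0) - (if ((k:ℕ):ℤ) = T4 then 1 else 0)))
      = (if 0 ≤ T1 ∧ T1 < (r:ℤ) ∧ T1 ≤ (J:ℤ) then 1 else 0)
        - (if 0 ≤ T2 ∧ T2 < (r:ℤ) ∧ T2 ≤ (J:ℤ) then 1 else 0)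
        + (if 0 ≤ T3 ∧ T3 < (r:ℤ) ∧ T3 ≤ (J:ℤ) then 1 else 0)
        - (if 0 ≤ T4 ∧ T4 < (r:ℤ) ∧ T4 ≤ (J:ℤ) then 1 else 0) := by
  simp only [mul_sub, mul_add]
  rw [Finset.sum_sub_distrib, Finset.sum_add_distrib, Finset.sum_sub_distrib,
    S1 r J T1, S1 r J T2, S1 r J T3, S1 r J T4]

lemma S2four (r : ℕ) (J : ℕ) (T1 T2 T3 T4 : ℤ) :
    (∑ k : Fin r, (-(if J ≤ (k : ℕ) then (1:ℚ) else 0)) *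
      ((if ((k:ℕ):ℤ) = T1 then 1 else 0) - (if ((k:ℕ):ℤ) = T2 then 1 else 0)
        + (if ((k:ℕ):ℤ) = T3 then 1 else 0) - (if ((k:ℕ):ℤ) = T4 then 1 else 0)))
      = -((if (J:ℤ) ≤ T1 ∧ T1 < (r:ℤ) then 1 else 0)
        - (if (J:ℤ) ≤ T2 ∧ T2 < (r:ℤ) then 1 else 0)
        + (if (J:ℤ) ≤ T3 ∧ T3 < (r:ℤ) then 1 else 0)
        - (if (J:ℤ) ≤ T4 ∧ T4 < (r:ℤ) then 1 else 0)) := by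
  simp only [neg_mul, Finset.sum_neg_distrib]
  rw [neg_inj]
  simp only [mul_sub, mul_add]
  rw [Finset.sum_sub_distrib, Finset.sum_add_distrib, Finset.sum_sub_distrib,
    S2 r J T1, S2 r J T2, S2 r J T3, S2 r J T4]

lemma sum_ind_Ico (s t : ℕ) (T : ℤ) (x : ℚ) :
    (∑ b ∈ Finset.Ico s t, if ((b:ℕ):ℤ) = T then x else 0)
      = if (s:ℤ) ≤ T ∧ T < (t:ℤ) then x else 0 := by
  by_cases h : (s:ℤ) ≤ T ∧ T < (t:ℤ)
  · rw [if_pos h, Finset.sum_eq_single T.toNat]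
    · rw [if_pos (by omega)]
    · intro b _ hb; rw [if_neg (by omega)]
    · intro h'
      exact absurd (Finset.mem_Ico.mpr ⟨by omega, by omega⟩) h'
  · rw [if_neg h]
    refine Finset.sum_eq_zero fun b hb => ?_
    rw [Finset.mem_Ico] at hb
    rw [if_neg (by omega)]

lemma SIco3 (s t : ℕ) (T1 T2 T3 : ℤ) (x1 x2 x3 : ℚ) :
    (∑ b ∈ Finset.Ico s t,
      ((if ((b:ℕ):ℤ) = T1 then x1 else 0) + (if ((b:ℕ):ℤ) = T2 then x2 else 0)
        + (if ((b:ℕ):ℤ) = T3 then x3 else 0)))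
      = (if (s:ℤ) ≤ T1 ∧ T1 < (t:ℤ) then x1 else 0)
        + (if (s:ℤ) ≤ T2 ∧ T2 < (t:ℤ) then x2 else 0)
        + (if (s:ℤ) ≤ T3 ∧ T3 < (t:ℤ) then x3 else 0) := by
  rw [Finset.sum_add_distrib, Finset.sum_add_distrib,
    sum_ind_Ico s t T1 x1, sum_ind_Ico s t T2 x2, sum_ind_Ico s t T3 x3]

def Gf (r a c : ℕ) (jj ll : ℤ) (b : ℕ) : ℚ :=
  if b = a then 0
  else if a < b then
    (if b < c then
      ((if ((b:ℕ):ℤ) = (c:ℤ) - ll then (1:ℚ) else 0)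
        + (if ((b:ℕ):ℤ) = (c:ℤ) + jj + 1 - ll then (-1:ℚ) else 0)
        + (if ((b:ℕ):ℤ) = (c:ℤ) + jj - ll - (r:ℤ) then (-1:ℚ) else 0))
    else if b = c then
      (if ll = 0 then (1:ℚ) else 0) - (if jj = ll then 1 else 0) - (if jj + 1 = ll then 1 else 0)
    else
      ((if ((b:ℕ):ℤ) = (c:ℤ) + jj - ll then (-1:ℚ) else 0)
        + (if ((b:ℕ):ℤ) = (c:ℤ) + (r:ℤ) - ll then (1:ℚ) else 0)
        + (if ((b:ℕ):ℤ) = (c:ℤ) + jj + (r:ℤ) + 1 - ll then (-1:ℚ) else 0)))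
  else
    (if b < c then
      ((if ((b:ℕ):ℤ) = (c:ℤ) + jj - ll then (-1:ℚ) else 0)
        + (if ((b:ℕ):ℤ) = (c:ℤ) + jj - ll - (r:ℤ) - 1 then (-1:ℚ) else 0)
        + (if ((b:ℕ):ℤ) = (c:ℤ) - 1 - ll then (1:ℚ) else 0))
    else if b = c then
      -(if jj = ll then (1:ℚ) else 0) - (if ll + 1 = jj then 1 else 0)
        + (if ll = (r:ℤ) - 1 then 1 else 0)
    else
      ((if ((b:ℕ):ℤ) = (c:ℤ) + jj - ll - 1 then (-1:ℚ) else 0)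
        + (if ((b:ℕ):ℤ) = (c:ℤ) + (r:ℤ) - 1 - ll then (1:ℚ) else 0)
        + (if ((b:ℕ):ℤ) = (c:ℤ) + jj + (r:ℤ) - ll then (-1:ℚ) else 0)))

lemma Ico_succ_self (a : ℕ) : Finset.Ico a (a+1) = {a} := by
  ext x; rw [Finset.mem_Ico, Finset.mem_singleton]; omega

lemma Gf_sum (r a c : ℕ) (jj ll : ℤ) (hr : 2 ≤ r) (ha : a ≤ r) (hc : c ≤ r)
    (hj : 0 ≤ jj) (hj' : jj < r) (hl : 0 ≤ ll) (hl' : ll < r) :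
    (∑ b ∈ Finset.range (r + 1), Gf r a c jj ll b)
      = if a = c ∧ jj = ll then 1 else 0 := by
  have hGa : Gf r a c jj ll a = 0 := by simp [Gf]
  rcases lt_trichotomy a c with h | h | h
  · -- a < c
    have hD : ∀ b ∈ Finset.Ico 0 a, Gf r a c jj ll b =
        ((if ((b:ℕ):ℤ) = (c:ℤ) + jj - ll then (-1:ℚ) else 0)
          + (if ((b:ℕ):ℤ) = (c:ℤ) + jj - ll - (r:ℤ) - 1 then (-1:ℚ) else 0)
          + (if ((b:ℕ):ℤ) = (c:ℤ) - 1 - ll then (1:ℚ) else 0)) := by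
      intro b hb; rw [Finset.mem_Ico] at hb
      simp only [Gf]
      rw [if_neg (show ¬ b = a by omega), if_neg (show ¬ a < b by omega),
        if_pos (show b < c by omega)]
    have hA : ∀ b ∈ Finset.Ico (a+1) c, Gf r a c jj ll b =
        ((if ((b:ℕ):ℤ) = (c:ℤ) - ll then (1:ℚ) else 0)
          + (if ((b:ℕ):ℤ) = (c:ℤ) + jj + 1 - ll then (-1:ℚ) else 0)
          + (if ((b:ℕ):ℤ) = (c:ℤ) + jj - ll - (r:ℤ) then (-1:ℚ) else 0)) := by
      intro b hb; rw [Finset.mem_Ico] at hb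
      simp only [Gf]
      rw [if_neg (show ¬ b = a by omega), if_pos (show a < b by omega),
        if_pos (show b < c by omega)]
    have hC : ∀ b ∈ Finset.Ico (c+1) (r+1), Gf r a c jj ll b =
        ((if ((b:ℕ):ℤ) = (c:ℤ) + jj - ll then (-1:ℚ) else 0)
          + (if ((b:ℕ):ℤ) = (c:ℤ) + (r:ℤ) - ll then (1:ℚ) else 0)
          + (if ((b:ℕ):ℤ) = (c:ℤ) + jj + (r:ℤ) + 1 - ll then (-1:ℚ) else 0)) := by
      intro b hb; rw [Finset.mem_Ico] at hb
      simp only [Gf]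
      rw [if_neg (show ¬ b = a by omega), if_pos (show a < b by omega),
        if_neg (show ¬ b < c by omega), if_neg (show ¬ b = c by omega)]
    have hGc : Gf r a c jj ll c =
        (if ll = 0 then (1:ℚ) else 0) - (if jj = ll then 1 else 0)
          - (if jj + 1 = ll then 1 else 0) := by
      simp only [Gf]
      rw [if_neg (show ¬ c = a by omega), if_pos (show a < c by omega),
        if_neg (show ¬ c < c by omega)]
      simp only [if_true]
    rw [Finset.range_eq_Ico,
      ← Finset.sum_Ico_consecutive _ (show 0 ≤ c+1 by omega) (show c+1 ≤ r+1 by omega),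
      ← Finset.sum_Ico_consecutive _ (show 0 ≤ c by omega) (show c ≤ c+1 by omega),
      ← Finset.sum_Ico_consecutive _ (show 0 ≤ a+1 by omega) (show a+1 ≤ c by omega),
      ← Finset.sum_Ico_consecutive _ (show 0 ≤ a by omega) (show a ≤ a+1 by omega)]
    rw [Finset.sum_congr rfl hD, Finset.sum_congr rfl hA, Finset.sum_congr rfl hC,
      Ico_succ_self a, Ico_succ_self c,
      Finset.sum_singleton, Finset.sum_singleton, hGa, hGc, SIco3, SIco3, SIco3]
    rw [if_neg (show ¬ (a = c ∧ jj = ll) by intro hx; omega)]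
    push_cast
    have hF1 : (if (0:ℤ) ≤ (c:ℤ) - 1 - ll ∧ (c:ℤ) - 1 - ll < (a:ℤ) then (1:ℚ) else 0)
        + (if (a:ℤ) + 1 ≤ (c:ℤ) - ll ∧ (c:ℤ) - ll < (c:ℤ) then (1:ℚ) else 0)
        + (if ll = 0 then (1:ℚ) else 0)
        + (if (c:ℤ) + 1 ≤ (c:ℤ) + (r:ℤ) - ll ∧ (c:ℤ) + (r:ℤ) - ll < (r:ℤ) + 1 then (1:ℚ) else 0)
        = 1 := by
      split_ifs <;> first | (exfalso; omega) | norm_num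
    have hF23 : (if (a:ℤ) + 1 ≤ (c:ℤ) + jj + 1 - ll ∧ (c:ℤ) + jj + 1 - ll < (c:ℤ) then (-1:ℚ) else 0)
        + (if (a:ℤ) + 1 ≤ (c:ℤ) + jj - ll - (r:ℤ) ∧ (c:ℤ) + jj - ll - (r:ℤ) < (c:ℤ) then (-1:ℚ) else 0)
        - (if jj = ll then (1:ℚ) else 0) - (if jj + 1 = ll then (1:ℚ) else 0)
        + (if (c:ℤ) + 1 ≤ (c:ℤ) + jj - ll ∧ (c:ℤ) + jj - ll < (r:ℤ) + 1 then (-1:ℚ) else 0)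
        + (if (c:ℤ) + 1 ≤ (c:ℤ) + jj + (r:ℤ) + 1 - ll ∧ (c:ℤ) + jj + (r:ℤ) + 1 - ll < (r:ℤ) + 1 then (-1:ℚ) else 0)
        + (if (0:ℤ) ≤ (c:ℤ) + jj - ll ∧ (c:ℤ) + jj - ll < (a:ℤ) then (-1:ℚ) else 0)
        + (if (0:ℤ) ≤ (c:ℤ) + jj - ll - (r:ℤ) - 1 ∧ (c:ℤ) + jj - ll - (r:ℤ) - 1 < (a:ℤ) then (-1:ℚ) else 0)
        = -1 := by
      split_ifs <;> first | (exfalso; omega) | norm_num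
    linear_combination hF1 + hF23
  · -- a = c
    subst h
    have hD : ∀ b ∈ Finset.Ico 0 a, Gf r a a jj ll b =
        ((if ((b:ℕ):ℤ) = (a:ℤ) + jj - ll then (-1:ℚ) else 0)
          + (if ((b:ℕ):ℤ) = (a:ℤ) + jj - ll - (r:ℤ) - 1 then (-1:ℚ) else 0)
          + (if ((b:ℕ):ℤ) = (a:ℤ) - 1 - ll then (1:ℚ) else 0)) := by
      intro b hb; rw [Finset.mem_Ico] at hb
      simp only [Gf]
      rw [if_neg (show ¬ b = a by omega), if_neg (show ¬ a < b by omega),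
        if_pos (show b < a by omega)]
    have hC : ∀ b ∈ Finset.Ico (a+1) (r+1), Gf r a a jj ll b =
        ((if ((b:ℕ):ℤ) = (a:ℤ) + jj - ll then (-1:ℚ) else 0)
          + (if ((b:ℕ):ℤ) = (a:ℤ) + (r:ℤ) - ll then (1:ℚ) else 0)
          + (if ((b:ℕ):ℤ) = (a:ℤ) + jj + (r:ℤ) + 1 - ll then (-1:ℚ) else 0)) := by
      intro b hb; rw [Finset.mem_Ico] at hb
      simp only [Gf]
      rw [if_neg (show ¬ b = a by omega), if_pos (show a < b by omega),
        if_neg (show ¬ b < a by omega), if_neg (show ¬ b = a by omega)]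
    rw [Finset.range_eq_Ico,
      ← Finset.sum_Ico_consecutive _ (show 0 ≤ a+1 by omega) (show a+1 ≤ r+1 by omega),
      ← Finset.sum_Ico_consecutive _ (show 0 ≤ a by omega) (show a ≤ a+1 by omega)]
    rw [Finset.sum_congr rfl hD, Finset.sum_congr rfl hC,
      Ico_succ_self a, Finset.sum_singleton, hGa, SIco3, SIco3]
    push_cast
    have hF1 : (if (0:ℤ) ≤ (a:ℤ) - 1 - ll ∧ (a:ℤ) - 1 - ll < (a:ℤ) then (1:ℚ) else 0)
        + (if (a:ℤ) + 1 ≤ (a:ℤ) + (r:ℤ) - ll ∧ (a:ℤ) + (r:ℤ) - ll < (r:ℤ) + 1 then (1:ℚ) else 0)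
        = 1 := by
      split_ifs <;> first | (exfalso; omega) | norm_num
    rcases eq_or_ne jj ll with he | he
    · have hF23 : (if (0:ℤ) ≤ (a:ℤ) + jj - ll ∧ (a:ℤ) + jj - ll < (a:ℤ) then (-1:ℚ) else 0)
          + (if (0:ℤ) ≤ (a:ℤ) + jj - ll - (r:ℤ) - 1 ∧ (a:ℤ) + jj - ll - (r:ℤ) - 1 < (a:ℤ) then (-1:ℚ) else 0)
          + (if (a:ℤ) + 1 ≤ (a:ℤ) + jj - ll ∧ (a:ℤ) + jj - ll < (r:ℤ) + 1 then (-1:ℚ) else 0)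
          + (if (a:ℤ) + 1 ≤ (a:ℤ) + jj + (r:ℤ) + 1 - ll ∧ (a:ℤ) + jj + (r:ℤ) + 1 - ll < (r:ℤ) + 1 then (-1:ℚ) else 0)
          = 0 := by
        split_ifs <;> first | (exfalso; omega) | norm_num
      rw [if_pos (show a = a ∧ jj = ll from ⟨rfl, he⟩)]
      linear_combination hF1 + hF23
    · have hF23 : (if (0:ℤ) ≤ (a:ℤ) + jj - ll ∧ (a:ℤ) + jj - ll < (a:ℤ) then (-1:ℚ) else 0)
          + (if (0:ℤ) ≤ (a:ℤ) + jj - ll - (r:ℤ) - 1 ∧ (a:ℤ) + jj - ll - (r:ℤ) - 1 < (a:ℤ) then (-1:ℚ) else 0)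
          + (if (a:ℤ) + 1 ≤ (a:ℤ) + jj - ll ∧ (a:ℤ) + jj - ll < (r:ℤ) + 1 then (-1:ℚ) else 0)
          + (if (a:ℤ) + 1 ≤ (a:ℤ) + jj + (r:ℤ) + 1 - ll ∧ (a:ℤ) + jj + (r:ℤ) + 1 - ll < (r:ℤ) + 1 then (-1:ℚ) else 0)
          = -1 := by
        split_ifs <;> first | (exfalso; omega) | norm_num
      rw [if_neg (show ¬(a = a ∧ jj = ll) from fun hx => he hx.2)]
      linear_combination hF1 + hF23
  · -- c < a
    have hD : ∀ b ∈ Finset.Ico 0 c, Gf r a c jj ll b =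
        ((if ((b:ℕ):ℤ) = (c:ℤ) + jj - ll then (-1:ℚ) else 0)
          + (if ((b:ℕ):ℤ) = (c:ℤ) + jj - ll - (r:ℤ) - 1 then (-1:ℚ) else 0)
          + (if ((b:ℕ):ℤ) = (c:ℤ) - 1 - ll then (1:ℚ) else 0)) := by
      intro b hb; rw [Finset.mem_Ico] at hb
      simp only [Gf]
      rw [if_neg (show ¬ b = a by omega), if_neg (show ¬ a < b by omega),
        if_pos (show b < c by omega)]
    have hF : ∀ b ∈ Finset.Ico (c+1) a, Gf r a c jj ll b =
        ((if ((b:ℕ):ℤ) = (c:ℤ) + jj - ll - 1 then (-1:ℚ) else 0)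
          + (if ((b:ℕ):ℤ) = (c:ℤ) + (r:ℤ) - 1 - ll then (1:ℚ) else 0)
          + (if ((b:ℕ):ℤ) = (c:ℤ) + jj + (r:ℤ) - ll then (-1:ℚ) else 0)) := by
      intro b hb; rw [Finset.mem_Ico] at hb
      simp only [Gf]
      rw [if_neg (show ¬ b = a by omega), if_neg (show ¬ a < b by omega),
        if_neg (show ¬ b < c by omega), if_neg (show ¬ b = c by omega)]
    have hC : ∀ b ∈ Finset.Ico (a+1) (r+1), Gf r a c jj ll b =
        ((if ((b:ℕ):ℤ) = (c:ℤ) + jj - ll then (-1:ℚ) else 0)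
          + (if ((b:ℕ):ℤ) = (c:ℤ) + (r:ℤ) - ll then (1:ℚ) else 0)
          + (if ((b:ℕ):ℤ) = (c:ℤ) + jj + (r:ℤ) + 1 - ll then (-1:ℚ) else 0)) := by
      intro b hb; rw [Finset.mem_Ico] at hb
      simp only [Gf]
      rw [if_neg (show ¬ b = a by omega), if_pos (show a < b by omega),
        if_neg (show ¬ b < c by omega), if_neg (show ¬ b = c by omega)]
    have hGc : Gf r a c jj ll c =
        -(if jj = ll then (1:ℚ) else 0) - (if ll + 1 = jj then 1 else 0)
          + (if ll = (r:ℤ) - 1 then 1 else 0) := by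
      simp only [Gf]
      rw [if_neg (show ¬ c = a by omega), if_neg (show ¬ a < c by omega),
        if_neg (show ¬ c < c by omega)]
      simp only [if_true]
    rw [Finset.range_eq_Ico,
      ← Finset.sum_Ico_consecutive _ (show 0 ≤ a+1 by omega) (show a+1 ≤ r+1 by omega),
      ← Finset.sum_Ico_consecutive _ (show 0 ≤ a by omega) (show a ≤ a+1 by omega),
      ← Finset.sum_Ico_consecutive _ (show 0 ≤ c+1 by omega) (show c+1 ≤ a by omega),
      ← Finset.sum_Ico_consecutive _ (show 0 ≤ c by omega) (show c ≤ c+1 by omega)]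
    rw [Finset.sum_congr rfl hD, Finset.sum_congr rfl hF, Finset.sum_congr rfl hC,
      Ico_succ_self a, Ico_succ_self c,
      Finset.sum_singleton, Finset.sum_singleton, hGa, hGc, SIco3, SIco3, SIco3]
    rw [if_neg (show ¬ (a = c ∧ jj = ll) by intro hx; omega)]
    push_cast
    have hF1 : (if (0:ℤ) ≤ (c:ℤ) - 1 - ll ∧ (c:ℤ) - 1 - ll < (c:ℤ) then (1:ℚ) else 0)
        + (if ll = (r:ℤ) - 1 then (1:ℚ) else 0)
        + (if (c:ℤ) + 1 ≤ (c:ℤ) + (r:ℤ) - 1 - ll ∧ (c:ℤ) + (r:ℤ) - 1 - ll < (a:ℤ) then (1:ℚ) else 0)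
        + (if (a:ℤ) + 1 ≤ (c:ℤ) + (r:ℤ) - ll ∧ (c:ℤ) + (r:ℤ) - ll < (r:ℤ) + 1 then (1:ℚ) else 0)
        = 1 := by
      split_ifs <;> first | (exfalso; omega) | norm_num
    have hF23 : (if (0:ℤ) ≤ (c:ℤ) + jj - ll ∧ (c:ℤ) + jj - ll < (c:ℤ) then (-1:ℚ) else 0)
        + (if (0:ℤ) ≤ (c:ℤ) + jj - ll - (r:ℤ) - 1 ∧ (c:ℤ) + jj - ll - (r:ℤ) - 1 < (c:ℤ) then (-1:ℚ) else 0)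
        - (if jj = ll then (1:ℚ) else 0) - (if ll + 1 = jj then (1:ℚ) else 0)
        + (if (c:ℤ) + 1 ≤ (c:ℤ) + jj - ll - 1 ∧ (c:ℤ) + jj - ll - 1 < (a:ℤ) then (-1:ℚ) else 0)
        + (if (c:ℤ) + 1 ≤ (c:ℤ) + jj + (r:ℤ) - ll ∧ (c:ℤ) + jj + (r:ℤ) - ll < (a:ℤ) then (-1:ℚ) else 0)
        + (if (a:ℤ) + 1 ≤ (c:ℤ) + jj - ll ∧ (c:ℤ) + jj - ll < (r:ℤ) + 1 then (-1:ℚ) else 0)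
        + (if (a:ℤ) + 1 ≤ (c:ℤ) + jj + (r:ℤ) + 1 - ll ∧ (c:ℤ) + jj + (r:ℤ) + 1 - ll < (r:ℤ) + 1 then (-1:ℚ) else 0)
        = -1 := by
      split_ifs <;> first | (exfalso; omega) | norm_num
    linear_combination hF1 + hF23

lemma HK (r : ℕ) (hr : 2 ≤ r) (H : Matrix (Fin (r+1) × Fin r) (Fin (r+1) × Fin r) ℚ)
    (hH : ∀ (α β : Fin (r+1)) (j k : Fin r), H (α, j) (β, k) =
      if α = β then 0 else if α < β then (if (k:ℕ) ≤ (j:ℕ) then 1 else 0)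
      else -(if (j:ℕ) ≤ (k:ℕ) then 1 else 0)) :
    H * Kmat r = 1 := by
  ext ⟨α, j⟩ ⟨γ, l⟩
  rw [Matrix.mul_apply, Fintype.sum_prod_type]
  have hj := j.isLt
  have hl := l.isLt
  have hα : (α:ℕ) ≤ r := by have := α.isLt; omega
  have hγ : (γ:ℕ) ≤ r := by have := γ.isLt; omega
  have hrow : ∀ β : Fin (r+1),
      (∑ k : Fin r, H (α, j) (β, k) * Kmat r (β, k) (γ, l))
        = Gf r (α:ℕ) (γ:ℕ) ((j:ℕ):ℤ) ((l:ℕ):ℤ) ((β:ℕ)) := by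
    intro β
    have hβ : (β:ℕ) ≤ r := by have := β.isLt; omega
    rcases lt_trichotomy α β with hab | hab | hab
    · have hab' : (α:ℕ) < (β:ℕ) := hab
      rcases lt_trichotomy β γ with hbc | hbc | hbc
      · have hbc' : (β:ℕ) < (γ:ℕ) := hbc
        rw [Finset.sum_congr rfl (fun k _ => by
          rw [hH, if_neg (ne_of_lt hab), if_pos hab, Kmat_apply,
            Kblk_apply_lt r β γ hbc]), S1four]
        simp only [Gf]
        rw [if_neg (show ¬ (β:ℕ) = (α:ℕ) by omega), if_pos (show (α:ℕ) < (β:ℕ) by omega),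
          if_pos (show (β:ℕ) < (γ:ℕ) by omega)]
        split_ifs <;> first | (exfalso; omega) | norm_num
      · have hbc' : (β:ℕ) = (γ:ℕ) := congrArg Fin.val hbc
        rw [Finset.sum_congr rfl (fun k _ => by
          rw [hH, if_neg (ne_of_lt hab), if_pos hab, Kmat_apply, hbc,
            Kblk_apply_diag r γ]), S1four]
        simp only [Gf]
        rw [if_neg (show ¬ (β:ℕ) = (α:ℕ) by omega), if_pos (show (α:ℕ) < (β:ℕ) by omega),
          if_neg (show ¬ (β:ℕ) < (γ:ℕ) by omega), if_pos (show (β:ℕ) = (γ:ℕ) by omega)]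
        split_ifs <;> first | (exfalso; omega) | norm_num
      · have hbc' : (γ:ℕ) < (β:ℕ) := hbc
        rw [Finset.sum_congr rfl (fun k _ => by
          rw [hH, if_neg (ne_of_lt hab), if_pos hab, Kmat_apply,
            Kblk_apply_gt r β γ hbc]), S1four]
        simp only [Gf]
        rw [if_neg (show ¬ (β:ℕ) = (α:ℕ) by omega), if_pos (show (α:ℕ) < (β:ℕ) by omega),
          if_neg (show ¬ (β:ℕ) < (γ:ℕ) by omega), if_neg (show ¬ (β:ℕ) = (γ:ℕ) by omega)]
        split_ifs <;> first | (exfalso; omega) | norm_num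
    · subst hab
      rw [Finset.sum_congr rfl (fun k _ => by rw [hH, if_pos rfl, zero_mul]),
        Finset.sum_const_zero]
      simp only [Gf]
      rw [if_true]
    · have hab' : (β:ℕ) < (α:ℕ) := hab
      rcases lt_trichotomy β γ with hbc | hbc | hbc
      · have hbc' : (β:ℕ) < (γ:ℕ) := hbc
        rw [Finset.sum_congr rfl (fun k _ => by
          rw [hH, if_neg (ne_of_gt hab), if_neg (lt_asymm hab), Kmat_apply,
            Kblk_apply_lt r β γ hbc]), S2four]
        simp only [Gf]
        rw [if_neg (show ¬ (β:ℕ) = (α:ℕ) by omega), if_neg (show ¬ (α:ℕ) < (β:ℕ) by omega),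
          if_pos (show (β:ℕ) < (γ:ℕ) by omega)]
        split_ifs <;> first | (exfalso; omega) | norm_num
      · rw [Finset.sum_congr rfl (fun k _ => by
          rw [hH, if_neg (ne_of_gt hab), if_neg (lt_asymm hab), Kmat_apply, hbc,
            Kblk_apply_diag r γ]), S2four]
        have hbc' : (β:ℕ) = (γ:ℕ) := congrArg Fin.val hbc
        simp only [Gf]
        rw [if_neg (show ¬ (β:ℕ) = (α:ℕ) by omega), if_neg (show ¬ (α:ℕ) < (β:ℕ) by omega),
          if_neg (show ¬ (β:ℕ) < (γ:ℕ) by omega), if_pos (show (β:ℕ) = (γ:ℕ) by omega)]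
        split_ifs <;> first | (exfalso; omega) | norm_num
      · have hbc' : (γ:ℕ) < (β:ℕ) := hbc
        rw [Finset.sum_congr rfl (fun k _ => by
          rw [hH, if_neg (ne_of_gt hab), if_neg (lt_asymm hab), Kmat_apply,
            Kblk_apply_gt r β γ hbc]), S2four]
        simp only [Gf]
        rw [if_neg (show ¬ (β:ℕ) = (α:ℕ) by omega), if_neg (show ¬ (α:ℕ) < (β:ℕ) by omega),
          if_neg (show ¬ (β:ℕ) < (γ:ℕ) by omega), if_neg (show ¬ (β:ℕ) = (γ:ℕ) by omega)]
        split_ifs <;> first | (exfalso; omega) | norm_num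
  rw [Finset.sum_congr rfl (fun β _ => hrow β),
    Fin.sum_univ_eq_sum_range (fun b => Gf r (α:ℕ) (γ:ℕ) ((j:ℕ):ℤ) ((l:ℕ):ℤ) b) (r+1),
    Gf_sum r (α:ℕ) (γ:ℕ) ((j:ℕ):ℤ) ((l:ℕ):ℤ) hr hα hγ (by omega) (by omega) (by omega)
      (by omega),
    Matrix.one_apply]
  by_cases h2 : ((α, j) : Fin (r+1) × Fin r) = (γ, l)
  · rw [if_pos h2]
    injection h2 with e1 e2
    rw [if_pos ⟨by rw [e1], by rw [e2]⟩]
  · rw [if_neg h2, if_neg (fun hc => h2 (by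
      rw [show α = γ from Fin.ext hc.1, show j = l from Fin.ext (by exact_mod_cast hc.2)]))]

def Ff (r : ℕ) (D δ : ℤ) : ℚ :=
  if D = 0 then (if δ = -1 then 1 else 0) - (if δ = 1 then 1 else 0)
  else if 0 < D then
    (if δ = D then 1 else 0) - (if δ = D + 1 then 1 else 0)
      + (if δ = D - (r:ℤ) - 1 then 1 else 0) - (if δ = D - (r:ℤ) then 1 else 0)
  else
    -(if δ = D then 1 else 0) + (if δ = D - 1 then 1 else 0)
      - (if δ = D + (r:ℤ) + 1 then 1 else 0) + (if δ = D + (r:ℤ) then 1 else 0)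

lemma Kmat_eq_Ff (r : ℕ) (β γ : Fin (r + 1)) (k l : Fin r) :
    Kmat r (β, k) (γ, l) = Ff r (((γ:ℕ):ℤ) - ((β:ℕ):ℤ)) (((l:ℕ):ℤ) - ((k:ℕ):ℤ)) := by
  have hk := k.isLt
  have hl := l.isLt
  have hβ := β.isLt
  have hγ := γ.isLt
  rcases lt_trichotomy β γ with h | h | h
  · have h' : (β:ℕ) < (γ:ℕ) := h
    rw [show Kmat r (β, k) (γ, l) = Kblk r β γ k l from rfl, Kblk_apply_lt r β γ h, Ff,
      if_neg (show ¬ ((γ:ℕ):ℤ) - ((β:ℕ):ℤ) = 0 by omega),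
      if_pos (show (0:ℤ) < ((γ:ℕ):ℤ) - ((β:ℕ):ℤ) by omega)]
    split_ifs <;> first | (exfalso; omega) | norm_num
  · subst h
    rw [show Kmat r (β, k) (β, l) = Kblk r β β k l from rfl, Kblk_apply_diag r β, Ff,
      if_pos (show ((β:ℕ):ℤ) - ((β:ℕ):ℤ) = 0 by omega)]
    split_ifs <;> first | (exfalso; omega) | norm_num
  · have h' : (γ:ℕ) < (β:ℕ) := h
    rw [show Kmat r (β, k) (γ, l) = Kblk r β γ k l from rfl, Kblk_apply_gt r β γ h, Ff,
      if_neg (show ¬ ((γ:ℕ):ℤ) - ((β:ℕ):ℤ) = 0 by omega),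
      if_neg (show ¬ (0:ℤ) < ((γ:ℕ):ℤ) - ((β:ℕ):ℤ) by omega)]
    split_ifs <;> first | (exfalso; omega) | norm_num

lemma Ff_congr (r : ℕ) (hr : 2 ≤ r) (D D' δ δ' : ℤ)
    (hδ1 : -(r:ℤ) < δ) (hδ2 : δ < r) (hδ1' : -(r:ℤ) < δ') (hδ2' : δ' < r)
    (hD1 : -(r:ℤ) ≤ D) (hD2 : D ≤ r) (hD1' : -(r:ℤ) ≤ D') (hD2' : D' ≤ r)
    (h : D * r + δ = D' * r + δ') : Ff r D δ = Ff r D' δ' := by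
  have hr' : (2:ℤ) ≤ (r:ℤ) := by exact_mod_cast hr
  have hE : (D - D') * r = δ' - δ := by ring_nf; linarith
  have key : (D' = D ∧ δ' = δ) ∨ (D' = D + 1 ∧ δ' = δ - r) ∨ (D' = D - 1 ∧ δ' = δ + r) := by
    rcases lt_trichotomy D D' with hd | hd | hd
    · have h2 : D' = D + 1 := by
        by_contra hne
        have h3 : (D:ℤ) - D' ≤ -2 := by omega
        have h4 : (D - D') * r ≤ (-2) * r :=
          mul_le_mul_of_nonneg_right h3 (by omega)
        rw [hE] at h4
        omega
      have h5 : ((-1):ℤ) * r = δ' - δ := by rw [← hE, h2]; ring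
      right; left; exact ⟨h2, by omega⟩
    · left
      refine ⟨hd.symm, ?_⟩
      have h5 : ((0):ℤ) * r = δ' - δ := by rw [← hE, hd]; ring
      omega
    · have h2 : D' = D - 1 := by
        by_contra hne
        have h3 : (2:ℤ) ≤ D - D' := by omega
        have h4 : (2:ℤ) * r ≤ (D - D') * r :=
          mul_le_mul_of_nonneg_right h3 (by omega)
        rw [hE] at h4
        omega
      have h5 : ((1):ℤ) * r = δ' - δ := by rw [← hE, h2]; ring
      right; right; exact ⟨h2, by omega⟩
  rcases key with ⟨hD, hd⟩ | ⟨hD, hd⟩ | ⟨hD, hd⟩ <;> subst hD <;> subst hd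
  · rfl
  · rw [Ff, Ff]
    split_ifs <;> first | (exfalso; omega) | norm_num
  · rw [Ff, Ff]
    split_ifs <;> first | (exfalso; omega) | norm_num

/-- for `n = r+1`, `H_D` is invertible, its scalar entries are
constant along diagonals (scalar index of block entry `(α, j)` is `α·r + j`,
the 0-based version of the paper's `a = (α-1)r + j`), and its `r×r` blocks are
given explicitly in terms of `T_r`. Block indices `α, β : Fin (r+1)` are the
0-based versions of the paper's `1,…,n`, so the paper's `β - α` is `(β:ℕ) - (α:ℕ)`. -/
theorem stmt_12 (r : ℕ) (hr : 2 ≤ r)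
    (Mr Nr Tr : Matrix (Fin r) (Fin r) ℚ)
    (hMr : ∀ i j : Fin r, Mr i j = if j ≤ i then 1 else 0)
    (hNr : Nr = -Mrᵀ)
    (hTr : ∀ i j : Fin r, Tr i j = if (i : ℕ) + 1 = (j : ℕ) then 1 else 0)
    (H : Matrix (Fin (r + 1) × Fin r) (Fin (r + 1) × Fin r) ℚ)
    (hH : ∀ (α β : Fin (r + 1)) (j k : Fin r), H (α, j) (β, k) =
      if α = β then 0 else if α < β then Mr j k else Nr j k) :
    IsUnit H.det ∧
    (∀ p q p' q' : Fin (r + 1) × Fin r,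
      (((p'.1 : ℕ) : ℤ) * r + ((p'.2 : ℕ) : ℤ)) - (((p.1 : ℕ) : ℤ) * r + ((p.2 : ℕ) : ℤ)) =
        (((q'.1 : ℕ) : ℤ) * r + ((q'.2 : ℕ) : ℤ)) - (((q.1 : ℕ) : ℤ) * r + ((q.2 : ℕ) : ℤ)) →
      H⁻¹ p q = H⁻¹ p' q') ∧
    (∀ (α : Fin (r + 1)) (j k : Fin r), H⁻¹ (α, j) (α, k) = (Trᵀ - Tr) j k) ∧
    (∀ (α β : Fin (r + 1)) (j k : Fin r), α < β →
      H⁻¹ (α, j) (β, k) =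
        (Tr ^ ((β : ℕ) - (α : ℕ)) - Tr ^ ((β : ℕ) - (α : ℕ) + 1) +
          (Trᵀ) ^ (r - ((β : ℕ) - (α : ℕ)) + 1) - (Trᵀ) ^ (r - ((β : ℕ) - (α : ℕ)))) j k) ∧
    (∀ (α β : Fin (r + 1)) (j k : Fin r), β < α →
      H⁻¹ (α, j) (β, k) = - H⁻¹ (β, k) (α, j)) := by
  have hTr' : Tr = Jr r := by
    ext i k
    rw [hTr]
    rfl
  have hH' : ∀ (α β : Fin (r+1)) (j k : Fin r), H (α, j) (β, k) =
      if α = β then 0 else if α < β then (if (k:ℕ) ≤ (j:ℕ) then 1 else 0)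
      else -(if (j:ℕ) ≤ (k:ℕ) then 1 else 0) := by
    intro α β j k
    rw [hH, hNr]
    simp only [hMr, Matrix.neg_apply, Matrix.transpose_apply, Fin.le_def]
  have hHK : H * Kmat r = 1 := HK r hr H hH'
  have hInv : H⁻¹ = Kmat r := Matrix.inv_eq_right_inv hHK
  have hDet : IsUnit H.det := Matrix.isUnit_det_of_right_inverse hHK
  refine ⟨hDet, ?_, ?_, ?_, ?_⟩
  · rintro ⟨β, k⟩ ⟨γ, l⟩ ⟨β', k'⟩ ⟨γ', l'⟩ hdiff
    rw [hInv, Kmat_eq_Ff r β γ k l, Kmat_eq_Ff r β' γ' k' l']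
    have hk := k.isLt; have hl := l.isLt; have hk' := k'.isLt; have hl' := l'.isLt
    have hβ := β.isLt; have hγ := γ.isLt; have hβ' := β'.isLt; have hγ' := γ'.isLt
    refine Ff_congr r hr _ _ _ _ (by omega) (by omega) (by omega) (by omega)
      (by omega) (by omega) (by omega) (by omega) ?_
    simp only at hdiff
    linear_combination hdiff
  · intro α j k
    rw [hInv, hTr']
    show Kblk r α α j k = ((Jr r)ᵀ - Jr r) j k
    rw [Kblk, if_pos rfl]
  · intro α β j k h
    rw [hInv, hTr']
    show Kblk r α β j k = _
    rw [Kblk, if_neg (ne_of_lt h), if_pos h]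
  · intro α β j k h
    rw [hInv]
    show Kblk r α β j k = - Kblk r β α k j
    rw [Kblk, if_neg (ne_of_gt h), if_neg (lt_asymm h), Kblk,
      if_neg (ne_of_lt h), if_pos h]
    simp only [Matrix.neg_apply, Matrix.transpose_apply, Matrix.sub_apply, Matrix.add_apply,
      ← Matrix.transpose_pow, Matrix.transpose_apply]
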